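/- Assume dim_K V = 2. Let f0', f1' be elements of {f_0,...,f_n} forming a K-basis of V, let B be the (unique) 2 x (n+1) matrix over K with f_j = B_{0j} f0' + B_{1j} f1' for all 0 <= j <= n, and set (h0, h1)^T = B · (u^n, u^{n-1}v, ..., v^n)^T in K[u,v]^2. Then h0, h1 is an R-regular sequence. -/

import Mathlib

open MvPolynomial

/-- The bigrading weights on `K[s,t,u,v]`: `s,t` have bidegree `(1,0)` and
`u,v` have bidegree `(0,1)`. Variables: `X 0 = s`, `X 1 = t`, `X 2 = u`, `X 3 = v`. -/
def bw : Fin 4 → ℕ × ℕ := ![(1, 0), (1, 0), (0, 1), (0, 1)]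

section Aux

open Pointwise Finset

lemma RSaux.mem_smul_top_iff_dvd (R : Type*) [CommRing R] (r x : R) :
    x ∈ r • (⊤ : Submodule R R) ↔ r ∣ x := by
  rw [← SetLike.mem_coe, Submodule.coe_pointwise_smul, Set.mem_smul_set]
  simp [dvd_def, smul_eq_mul, eq_comm]

lemma RSaux.whX_pow (K : Type*) [Field K] (i : Fin 4) (e : ℕ) :
    IsWeightedHomogeneous bw (X i ^ e : MvPolynomial (Fin 4) K) (e • bw i) := by
  induction e with
  | zero => simpa using isWeightedHomogeneous_one _ _
  | succ m ih =>
      have := ih.mul (isWeightedHomogeneous_X (R := K) bw i)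
      rw [← pow_succ] at this
      rw [succ_nsmul]
      exact this

lemma RSaux.wh_term (K : Type*) [Field K] (c : K) (x y : Fin 4) (hx : bw x = (0,1))
    (hy : bw y = (0,1)) (e f : ℕ) :
    IsWeightedHomogeneous bw (C c * X x ^ e * X y ^ f : MvPolynomial (Fin 4) K) (0, e + f) := by
  have h2 := ((isWeightedHomogeneous_C (R := K) bw c).mul (RSaux.whX_pow K x e)).mul
    (RSaux.whX_pow K y f)
  convert h2 using 1
  rw [hx, hy]
  simp [Prod.ext_iff, Prod.smul_def]

lemma RSaux.prime_X4 (K : Type*) [Field K] (i : Fin 4) :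
    Prime (X i : MvPolynomial (Fin 4) K) := by
  rw [← MulEquiv.prime_iff (renameEquiv K (Equiv.swap i 0)).toMulEquiv]
  have h1 : (renameEquiv K (Equiv.swap i 0)).toMulEquiv (X i) = (X 0 : MvPolynomial (Fin 4) K) := by
    simp [renameEquiv_apply, rename_X]
  rw [h1, ← MulEquiv.prime_iff (finSuccEquiv K 3).toMulEquiv]
  have h2 : (finSuccEquiv K 3).toMulEquiv (X 0) = Polynomial.X := by
    simp [finSuccEquiv_X_zero]
  rw [h2]
  exact Polynomial.prime_X

lemma RSaux.core {K : Type*} [Field K] (n : ℕ) (x y : Fin 4) (a : ℕ → K) (w : K)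
    (hroot : ∑ j ∈ Finset.range (n+1), a j * w ^ (n - j) = 0) :
    (X x - C w * X y) * (∑ j ∈ Finset.range n,
        C (∑ k ∈ Finset.range (j+1), a k * w ^ (j - k)) * X x ^ (n - 1 - j) * X y ^ j)
      = ∑ j ∈ Finset.range (n+1),
          (C (a j) * X x ^ (n - j) * X y ^ j : MvPolynomial (Fin 4) K) := by
  set D : ℕ → K := fun j => ∑ k ∈ Finset.range (j+1), a k * w ^ (j - k) with hD
  set Dm : ℕ → K := fun j => ∑ k ∈ Finset.range j, a k * w ^ (j - 1 - k) with hDm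
  have hDmsucc : ∀ j, Dm (j+1) = D j := by
    intro j; simp [hD, hDm]
  have hDDm : ∀ j, D j - w * Dm j = a j := by
    intro j
    rw [hD, hDm]
    simp only
    rw [Finset.sum_range_succ, Finset.mul_sum]
    have : ∀ k ∈ Finset.range j, w * (a k * w ^ (j - 1 - k)) = a k * w ^ (j - k) := by
      intro k hk
      rw [Finset.mem_range] at hk
      have : j - 1 - k + 1 = j - k := by omega
      rw [← this, pow_succ]
      ring
    rw [Finset.sum_congr rfl this]
    simp
  have hDmn : w * Dm n = - a n := by
    have h1 : w * Dm n = ∑ k ∈ Finset.range n, a k * w ^ (n - k) := by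
      rw [hDm]; simp only
      rw [Finset.mul_sum]
      refine Finset.sum_congr rfl fun k hk => ?_
      rw [Finset.mem_range] at hk
      have : n - 1 - k + 1 = n - k := by omega
      rw [← this, pow_succ]; ring
    have h2 := hroot
    rw [Finset.sum_range_succ] at h2
    simp only [Nat.sub_self, pow_zero, mul_one] at h2
    rw [h1]; linear_combination h2
  rw [sub_mul, Finset.mul_sum, Finset.mul_sum]
  have e1 : ∀ j ∈ Finset.range n,
      (X x : MvPolynomial (Fin 4) K) * (C (D j) * X x ^ (n - 1 - j) * X y ^ j)
        = C (D j) * X x ^ (n - j) * X y ^ j := by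
    intro j hj
    rw [Finset.mem_range] at hj
    have : n - 1 - j + 1 = n - j := by omega
    rw [← this, pow_succ]
    ring
  have e2 : ∀ j ∈ Finset.range n,
      (C w * X y : MvPolynomial (Fin 4) K) * (C (D j) * X x ^ (n - 1 - j) * X y ^ j)
        = C (w * Dm (j+1)) * X x ^ (n - (j+1)) * X y ^ (j+1) := by
    intro j hj
    rw [Finset.mem_range] at hj
    have h3 : n - 1 - j = n - (j+1) := by omega
    rw [hDmsucc, h3, C_mul, pow_succ]
    ring
  rw [Finset.sum_congr rfl e1, Finset.sum_congr rfl e2]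
  have e3 : ∑ j ∈ Finset.range n,
      (C (w * Dm (j+1)) * X x ^ (n - (j+1)) * X y ^ (j+1) : MvPolynomial (Fin 4) K)
      = ∑ j ∈ Finset.range (n+1), C (w * Dm j) * X x ^ (n - j) * X y ^ j := by
    rw [Finset.sum_range_succ' (fun j => (C (w * Dm j) * X x ^ (n - j) * X y ^ j :
      MvPolynomial (Fin 4) K)) n]
    simp [hDm]
  rw [e3]
  rw [Finset.sum_range_succ (fun j => (C (w * Dm j) * X x ^ (n - j) * X y ^ j :
      MvPolynomial (Fin 4) K)) n,
    Finset.sum_range_succ (fun j => (C (a j) * X x ^ (n - j) * X y ^ j :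
      MvPolynomial (Fin 4) K)) n]
  have e4 : ∀ j ∈ Finset.range n,
      (C (a j) * X x ^ (n - j) * X y ^ j : MvPolynomial (Fin 4) K)
        = C (D j) * X x ^ (n - j) * X y ^ j - C (w * Dm j) * X x ^ (n - j) * X y ^ j := by
    intro j _
    rw [← sub_mul, ← sub_mul, ← C_sub, hDDm]
  rw [Finset.sum_congr rfl e4, Finset.sum_sub_distrib]
  have e5 : (C (a n) * X x ^ (n - n) * X y ^ n : MvPolynomial (Fin 4) K)
      = - (C (w * Dm n) * X x ^ (n - n) * X y ^ n) := by
    rw [hDmn]; simp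
  rw [e5]
  ring

lemma RSaux.kill {K : Type*} [Field K] (n : ℕ) (hn : 1 ≤ n)
    (p : Fin 4 → MvPolynomial (Fin 4) K)
    (hmin : ∀ m < n, ∀ h : Fin 4 → MvPolynomial (Fin 4) K,
      (∀ i, (h i).IsWeightedHomogeneous bw (0, m)) → ∑ i, h i * p i = 0 → h = 0)
    (g : Fin 4 → MvPolynomial (Fin 4) K) (hgne : g ≠ 0) (hgsyz : ∑ i, g i * p i = 0)
    (x y : Fin 4) (hx : bw x = (0,1)) (hy : bw y = (0,1)) (hxy : x ≠ y)
    (a : Fin 4 → ℕ → K) (w : K)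
    (hga : ∀ i, g i = ∑ j ∈ Finset.range (n+1), C (a i j) * X x ^ (n - j) * X y ^ j)
    (hroot : ∀ i, ∑ j ∈ Finset.range (n+1), a i j * w ^ (n - j) = 0) : False := by
  set q : Fin 4 → MvPolynomial (Fin 4) K := fun i => ∑ j ∈ Finset.range n,
    C (∑ k ∈ Finset.range (j+1), a i k * w ^ (j - k)) * X x ^ (n - 1 - j) * X y ^ j with hq
  set L : MvPolynomial (Fin 4) K := X x - C w * X y with hL
  have hfac : ∀ i, L * q i = g i := fun i => by
    rw [hga i]; exact RSaux.core n x y (a i) w (hroot i)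
  have hLne : L ≠ 0 := by
    intro h0
    have h1 := congrArg (eval (Function.update (0 : Fin 4 → K) x 1)) h0
    rw [hL] at h1
    simp [Function.update_of_ne hxy.symm] at h1
  have hqh : ∀ i, (q i).IsWeightedHomogeneous bw (0, n - 1) := by
    intro i
    rw [hq]
    apply IsWeightedHomogeneous.sum
    intro j hj
    rw [Finset.mem_range] at hj
    convert RSaux.wh_term K _ x y hx hy (n - 1 - j) j using 2
    omega
  have hqsyz : ∑ i, q i * p i = 0 := by
    have h2 : L * ∑ i, q i * p i = 0 := by
      rw [Finset.mul_sum]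
      simp_rw [← mul_assoc, hfac]
      exact hgsyz
    rcases mul_eq_zero.mp h2 with h | h
    · exact absurd h hLne
    · exact h
  have hq0 := hmin (n-1) (by omega) q hqh hqsyz
  apply hgne
  funext i
  rw [← hfac i, congrFun hq0 i, Pi.zero_apply, mul_zero]

end Aux

/-- If `dim_K V = 2`, `f₀', f₁'` is a basis of `V` chosen among the `f_j`, and
`(h₀,h₁)ᵀ = B ⬝ (uⁿ, u^{n-1}v, …, vⁿ)ᵀ` where `B` is the transition matrix with
`f_j = B₀ⱼ f₀' + B₁ⱼ f₁'`, then `h₀, h₁` is an `R`-regular sequence. -/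
theorem regular_sequence_of_dim_V_eq_two
    (K : Type*) [Field K] [IsAlgClosed K]
    (a b n : ℕ) (ha : 1 ≤ a) (hb : 1 ≤ b)
    (p : Fin 4 → MvPolynomial (Fin 4) K)
    (hp : ∀ i, (p i).IsWeightedHomogeneous bw (a, b))
    (hpli : LinearIndependent K p)
    (hbpf : ¬ ∃ x : Fin 4 → K, ¬(x 0 = 0 ∧ x 1 = 0) ∧ ¬(x 2 = 0 ∧ x 3 = 0) ∧
      ∀ i, eval x (p i) = 0)
    (g : Fin 4 → MvPolynomial (Fin 4) K)
    (hg : ∀ i, (g i).IsWeightedHomogeneous bw (0, n))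
    (hgne : g ≠ 0)
    (hgsyz : ∑ i, g i * p i = 0)
    (hmin : ∀ m < n, ∀ h : Fin 4 → MvPolynomial (Fin 4) K,
      (∀ i, (h i).IsWeightedHomogeneous bw (0, m)) → ∑ i, h i * p i = 0 → h = 0)
    (A : Fin 4 → Fin (n + 1) → K)
    (hgA : ∀ i, g i = ∑ j : Fin (n + 1), C (A i j) * X 2 ^ (n - (j : ℕ)) * X 3 ^ (j : ℕ))
    (f : Fin (n + 1) → MvPolynomial (Fin 4) K)
    (hf : ∀ j, f j = ∑ i, C (A i j) * p i)
    (hdim : Module.finrank K ↥(Submodule.span K (Set.range f)) = 2)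
    (f' : Fin 2 → MvPolynomial (Fin 4) K)
    (hf'mem : ∀ i, f' i ∈ Set.range f)
    (hf'li : LinearIndependent K f')
    (hf'span : Submodule.span K (Set.range f') = Submodule.span K (Set.range f))
    (B : Fin 2 → Fin (n + 1) → K)
    (hB : ∀ j, f j = ∑ i, C (B i j) * f' i)
    (h : Fin 2 → MvPolynomial (Fin 4) K)
    (hh : ∀ i, h i = ∑ j : Fin (n + 1), C (B i j) * X 2 ^ (n - (j : ℕ)) * X 3 ^ (j : ℕ)) :
    RingTheory.Sequence.IsRegular (MvPolynomial (Fin 4) K) [h 0, h 1] := by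
  classical
  -- linear independence in coefficient form
  have hli0 : ∀ c : Fin 4 → K, (∑ i, C (c i) * p i) = 0 → ∀ i, c i = 0 := by
    intro c hc
    exact Fintype.linearIndependent_iff.mp hpli c (by simpa [smul_eq_C_mul] using hc)
  -- n ≥ 1
  have hn1 : 1 ≤ n := by
    by_contra hcon
    have hn0 : n = 0 := by omega
    subst hn0
    have hgC : ∀ i, g i = C (A i 0) := by
      intro i
      rw [hgA i]
      simp
    have hz := hli0 (fun i => A i 0) (by
      rw [← hgsyz]
      exact Finset.sum_congr rfl fun i _ => by rw [hgC i])
    apply hgne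
    funext i
    rw [hgC i, show A i 0 = 0 from hz i, map_zero, Pi.zero_apply]
  -- choose indices realizing f'
  choose σ hσ using hf'mem
  -- transition coefficients
  have hAc : ∀ (j : Fin (n+1)) (i : Fin 4),
      A i j = ∑ k : Fin 2, A i (σ k) * B k j := by
    intro j
    have h1 : ∑ i, C (A i j) * p i = ∑ i, C (∑ k : Fin 2, A i (σ k) * B k j) * p i := by
      rw [← hf j]
      calc f j = ∑ k : Fin 2, C (B k j) * f' k := hB j
        _ = ∑ k : Fin 2, C (B k j) * ∑ i, C (A i (σ k)) * p i := by
            refine Finset.sum_congr rfl fun k _ => ?_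
            rw [← hf (σ k), hσ k]
        _ = ∑ i, C (∑ k : Fin 2, A i (σ k) * B k j) * p i := by
            simp_rw [Finset.mul_sum]
            rw [Finset.sum_comm]
            refine Finset.sum_congr rfl fun i _ => ?_
            rw [map_sum, Finset.sum_mul]
            refine Finset.sum_congr rfl fun k _ => ?_
            rw [C_mul]
            ring
    have h2 := hli0 (fun i => A i j - ∑ k : Fin 2, A i (σ k) * B k j) (by
      simp_rw [map_sub, sub_mul, Finset.sum_sub_distrib, h1, sub_self])
    intro i
    exact sub_eq_zero.mp (h2 i)
  -- key identity : g i = C c₀ h 0 + C c₁ h 1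
  have hgh : ∀ i, g i = C (A i (σ 0)) * h 0 + C (A i (σ 1)) * h 1 := by
    intro i
    rw [hgA i]
    calc (∑ j : Fin (n+1), C (A i j) * X 2 ^ (n - (j:ℕ)) * X 3 ^ (j:ℕ) : MvPolynomial (Fin 4) K)
        = ∑ j : Fin (n+1), ∑ k : Fin 2,
            C (A i (σ k)) * (C (B k j) * X 2 ^ (n - (j:ℕ)) * X 3 ^ (j:ℕ)) := by
          refine Finset.sum_congr rfl fun j _ => ?_
          rw [hAc j i, map_sum, Finset.sum_mul, Finset.sum_mul]
          refine Finset.sum_congr rfl fun k _ => ?_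
          rw [C_mul]
          ring
      _ = ∑ k : Fin 2, C (A i (σ k)) *
            ∑ j : Fin (n+1), C (B k j) * X 2 ^ (n - (j:ℕ)) * X 3 ^ (j:ℕ) := by
          rw [Finset.sum_comm]
          refine Finset.sum_congr rfl fun k _ => ?_
          rw [Finset.mul_sum]
      _ = C (A i (σ 0)) * h 0 + C (A i (σ 1)) * h 1 := by
          rw [Fin.sum_univ_two, hh 0, hh 1]
          try rfl
  -- ℕ-indexed coefficients
  set ANat : Fin 4 → ℕ → K := fun i j =>
    if hj : j < n + 1 then A i ⟨j, hj⟩ else 0 with hANat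
  have hgAr : ∀ i, g i = ∑ j ∈ Finset.range (n+1),
      C (ANat i j) * X 2 ^ (n - j) * X 3 ^ j := by
    intro i
    rw [hgA i, ← Fin.sum_univ_eq_sum_range
      (fun j => (C (ANat i j) * X 2 ^ (n - j) * X 3 ^ j : MvPolynomial (Fin 4) K)) (n+1)]
    refine Finset.sum_congr rfl fun j _ => ?_
    congr 2
    rw [hANat]
    simp [j.isLt]
  -- evaluation of g at points
  have hevg : ∀ (x : Fin 4 → K) i, eval x (g i)
      = ∑ j ∈ Finset.range (n+1), ANat i j * (x 2) ^ (n - j) * (x 3) ^ j := by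
    intro x i
    rw [hgAr i, map_sum]
    refine Finset.sum_congr rfl fun j _ => ?_
    simp
  -- no common zero of h 0, h 1 off {u = v = 0}
  have hnc : ∀ x : Fin 4 → K, ¬(x 2 = 0 ∧ x 3 = 0) →
      eval x (h 0) = 0 → eval x (h 1) = 0 → False := by
    intro x hx he0 he1
    have hvg : ∀ i, ∑ j ∈ Finset.range (n+1), ANat i j * (x 2) ^ (n - j) * (x 3) ^ j = 0 := by
      intro i
      rw [← hevg x i, hgh i]
      simp [he0, he1]
    by_cases hv : x 3 ≠ 0
    · -- normalized root (x2/x3, 1) : use variables (X 2, X 3)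
      refine RSaux.kill n hn1 p hmin g hgne hgsyz 2 3 rfl rfl (by decide) ANat (x 2 / x 3)
        hgAr (fun i => ?_)
      have key : ∀ j ∈ Finset.range (n+1),
          ANat i j * (x 2 / x 3) ^ (n - j)
            = (ANat i j * (x 2) ^ (n - j) * (x 3) ^ j) * ((x 3) ^ n)⁻¹ := by
        intro j hj
        rw [Finset.mem_range] at hj
        have e : ((x 3) ^ n)⁻¹ = ((x 3) ^ (n - j))⁻¹ * ((x 3) ^ j)⁻¹ := by
          rw [← mul_inv, ← pow_add]
          congr 2
          omega
        rw [e, div_pow, div_eq_mul_inv]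
        field_simp
      rw [Finset.sum_congr rfl key, ← Finset.sum_mul, hvg i, zero_mul]
    · -- x 3 = 0, so x 2 ≠ 0 : use variables (X 3, X 2) with reflected coefficients
      push_neg at hv
      have hu : x 2 ≠ 0 := fun h2 => hx ⟨h2, hv⟩
      set A' : Fin 4 → ℕ → K := fun i j => ANat i (n - j) with hA'
      have hga' : ∀ i, g i = ∑ j ∈ Finset.range (n+1),
          C (A' i j) * X 3 ^ (n - j) * X 2 ^ j := by
        intro i
        rw [hgAr i]
        rw [← Finset.sum_range_reflect (fun j =>
          (C (A' i j) * X 3 ^ (n - j) * X 2 ^ j : MvPolynomial (Fin 4) K)) (n+1)]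
        refine Finset.sum_congr rfl fun j hj => ?_
        rw [Finset.mem_range] at hj
        have e1 : n + 1 - 1 - j = n - j := by omega
        have e2 : n - (n - j) = j := by omega
        rw [e1, hA']
        simp only [e2]
        ring
      refine RSaux.kill n hn1 p hmin g hgne hgsyz 3 2 rfl rfl (by decide) A' (x 3 / x 2)
        hga' (fun i => ?_)
      have step1 : ∑ j ∈ Finset.range (n+1), A' i j * (x 3 / x 2) ^ (n - j)
          = ∑ j ∈ Finset.range (n+1), ANat i j * (x 3 / x 2) ^ j := by
        rw [← Finset.sum_range_reflect (fun j => ANat i j * (x 3 / x 2) ^ j) (n+1)]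
        refine Finset.sum_congr rfl fun j hj => ?_
        rw [Finset.mem_range] at hj
        have e1 : n + 1 - 1 - j = n - j := by omega
        rw [e1, hA']
      rw [step1]
      have key : ∀ j ∈ Finset.range (n+1),
          ANat i j * (x 3 / x 2) ^ j
            = (ANat i j * (x 2) ^ (n - j) * (x 3) ^ j) * ((x 2) ^ n)⁻¹ := by
        intro j hj
        rw [Finset.mem_range] at hj
        have e : ((x 2) ^ n)⁻¹ = ((x 2) ^ (n - j))⁻¹ * ((x 2) ^ j)⁻¹ := by
          rw [← mul_inv, ← pow_add]
          congr 2
          omega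
        rw [e, div_pow, div_eq_mul_inv]
        field_simp
      rw [Finset.sum_congr rfl key, ← Finset.sum_mul, hvg i, zero_mul]
  -- Nullstellensatz : powers of X 2, X 3 lie in the span
  set I : Ideal (MvPolynomial (Fin 4) K) := Ideal.span {h 0, h 1} with hI
  have hmem0 : h 0 ∈ I := Ideal.subset_span (by simp)
  have hmem1 : h 1 ∈ I := Ideal.subset_span (by simp)
  have hrad : ∀ i : Fin 4, i = 2 ∨ i = 3 → (X i : MvPolynomial (Fin 4) K) ∈ I.radical := by
    intro i hi
    rw [← vanishingIdeal_zeroLocus_eq_radical (K := K), mem_vanishingIdeal_iff]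
    intro x hx
    rw [mem_zeroLocus_iff] at hx
    change ∀ p ∈ I, eval x p = 0 at hx
    change eval x (X i) = 0
    rw [eval_X]
    by_contra hxi
    apply hnc x ?_ (hx _ hmem0) (hx _ hmem1)
    rcases hi with rfl | rfl
    · exact fun hc => hxi hc.1
    · exact fun hc => hxi hc.2
  obtain ⟨N, hN⟩ := Ideal.mem_radical_iff.mp (hrad 2 (Or.inl rfl))
  obtain ⟨M, hM⟩ := Ideal.mem_radical_iff.mp (hrad 3 (Or.inr rfl))
  -- relative primality
  have hrel : IsRelPrime (h 0) (h 1) := by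
    intro d hd0 hd1
    have hdvd : ∀ z ∈ I, d ∣ z := by
      intro z hz
      obtain ⟨α, β, hαβ⟩ := Ideal.mem_span_pair.mp (hI ▸ hz)
      rw [← hαβ]
      exact dvd_add (hd0.mul_left α) (hd1.mul_left β)
    have hX23 : IsRelPrime ((X 2 : MvPolynomial (Fin 4) K)) (X 3) := by
      intro e he2 he3
      obtain ⟨t, ht⟩ := he2
      rcases (RSaux.prime_X4 K 2).irreducible.isUnit_or_isUnit ht with hut | hut
      · exact hut
      · exfalso
        obtain ⟨u, rfl⟩ := hut
        have hX2e : (X 2 : MvPolynomial (Fin 4) K) ∣ e :=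
          ⟨(↑u⁻¹ : MvPolynomial (Fin 4) K), by rw [ht, mul_assoc, Units.mul_inv, mul_one]⟩
        obtain ⟨s, hs⟩ := hX2e.trans he3
        have := congrArg (eval (![0,0,0,1] : Fin 4 → K)) hs
        simp at this
    exact hX23.pow (hdvd _ hN) (hdvd _ hM)
  -- evaluation at zero
  have hev0 : ∀ k, eval (0 : Fin 4 → K) (h k) = 0 := by
    intro k
    rw [hh k, map_sum]
    refine Finset.sum_eq_zero fun j _ => ?_
    simp only [eval_mul, eval_C, eval_pow, eval_X, Pi.zero_apply]
    rw [mul_assoc, ← pow_add]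
    have e1 : n - (j:ℕ) + (j:ℕ) = n := by omega
    rw [e1, zero_pow (by omega), mul_zero]
  -- h 0 ≠ 0
  have hne0 : h 0 ≠ 0 := by
    intro h00
    by_cases h10 : h 1 = 0
    · apply hgne
      funext i
      rw [hgh i, h00, h10, mul_zero, mul_zero, add_zero, Pi.zero_apply]
    · have hu : IsUnit (h 1) := hrel (h00 ▸ dvd_zero (h 1)) dvd_rfl
      have h2 := hu.map (eval (0 : Fin 4 → K))
      rw [hev0 1] at h2
      exact h10 (by simpa using (isUnit_zero_iff.mp h2).symm ▸ (by simp : (1:K) ≠ 0) |> absurd rfl)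
  -- multiplication by h 0 is injective
  have hreg0 : IsSMulRegular (MvPolynomial (Fin 4) K) (h 0) := by
    intro z1 z2 hz
    exact mul_left_cancel₀ hne0 (by simpa [smul_eq_mul] using hz)
  -- multiplication by h 1 is injective modulo h 0
  have hreg1 : IsSMulRegular (QuotSMulTop (h 0) (MvPolynomial (Fin 4) K)) (h 1) := by
    intro z1 z2 hz
    obtain ⟨r1, rfl⟩ := Submodule.Quotient.mk_surjective _ z1
    obtain ⟨r2, rfl⟩ := Submodule.Quotient.mk_surjective _ z2
    have hz2 : (Submodule.Quotient.mk (h 1 * r1) :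
        QuotSMulTop (h 0) (MvPolynomial (Fin 4) K)) = Submodule.Quotient.mk (h 1 * r2) := hz
    rw [Submodule.Quotient.eq] at hz2
    rw [Submodule.Quotient.eq]
    rw [RSaux.mem_smul_top_iff_dvd] at hz2 ⊢
    have hz' : h 0 ∣ h 1 * (r1 - r2) := by
      rw [mul_sub]
      exact hz2
    exact hrel.dvd_of_dvd_mul_left hz'
  have hweak : RingTheory.Sequence.IsWeaklyRegular (MvPolynomial (Fin 4) K) [h 0, h 1] := by
    rw [RingTheory.Sequence.isWeaklyRegular_cons_iff]
    refine ⟨hreg0, ?_⟩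
    rw [RingTheory.Sequence.isWeaklyRegular_cons_iff]
    exact ⟨hreg1, RingTheory.Sequence.IsWeaklyRegular.nil _ _⟩
  refine ⟨hweak, ?_⟩
  intro htop
  have h1mem : (1 : MvPolynomial (Fin 4) K) ∈
      Ideal.ofList [h 0, h 1] • (⊤ : Submodule (MvPolynomial (Fin 4) K) (MvPolynomial (Fin 4) K)) :=
    htop ▸ Submodule.mem_top
  have hle : Ideal.ofList [h 0, h 1] •
      (⊤ : Submodule (MvPolynomial (Fin 4) K) (MvPolynomial (Fin 4) K)) ≤
      (Ideal.ofList [h 0, h 1] : Submodule (MvPolynomial (Fin 4) K) (MvPolynomial (Fin 4) K)) := by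
    refine Submodule.smul_le.mpr fun r hr m _ => ?_
    simpa [smul_eq_mul] using Ideal.mul_mem_right m _ hr
  have h1I : (1 : MvPolynomial (Fin 4) K) ∈ Ideal.ofList [h 0, h 1] := hle h1mem
  have hset : {r : MvPolynomial (Fin 4) K | r ∈ [h 0, h 1]} = {h 0, h 1} := by
    ext z; simp
  rw [Ideal.ofList, hset] at h1I
  obtain ⟨α, β, hαβ⟩ := Ideal.mem_span_pair.mp h1I
  have hcontr := congrArg (eval (0 : Fin 4 → K)) hαβ
  rw [map_add, map_mul, map_mul, hev0 0, hev0 1, mul_zero, mul_zero, add_zero, map_one] at hcontr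
  exact zero_ne_one hcontr
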